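/- Assume ξ is super-additive, i.e. ξ(x₁+x₂) ≥ ξ(x₁)+ξ(x₂) coordinatewise for all x₁,x₂∈ℕ^q. Then for every ℓ ≥ 1, every z₁,…,z_ℓ ∈ ℕ^p and every n ≥ 0: ℙ_{z₁+⋯+z_ℓ}(Z_n = 0) ≤ ∏_{i=1}^ℓ ℙ_{z_i}(Z_n = 0). -/

import Mathlib

open MeasureTheory Filter Topology
open scoped ENNReal NNReal

namespace BGW

variable {p q : ℕ}

/-- Mean matrix `𝕍`, where `ν i` is the law of the offspring vector `V_{i,·}`. -/
noncomputable def meanV (ν : Fin p → Measure (Fin q → ℕ)) (i : Fin p) (j : Fin q) : ℝ :=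
  ∫ w, (w j : ℝ) ∂(ν i)

/-- Law of the offspring vector `W₁` given `z` couples: sum over all couples of i.i.d. copies
of the `V_{i,·}`'s. -/
noncomputable def offspringLaw (ν : Fin p → Measure (Fin q → ℕ)) (z : Fin p → ℕ) :
    Measure (Fin q → ℕ) :=
  Measure.map (fun ω (j : Fin q) => ∑ ik : Σ i : Fin p, Fin (z i), ω ik j)
    (Measure.pi fun ik : Σ i : Fin p, Fin (z i) => ν ik.1)

/-- One-step transition law of the bisexual Galton--Watson process: `Z₁ = ξ(W₁)`. -/
noncomputable def stepLaw (ξ : (Fin q → ℕ) → Fin p → ℕ) (ν : Fin p → Measure (Fin q → ℕ))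
    (z : Fin p → ℕ) : Measure (Fin p → ℕ) :=
  (offspringLaw ν z).map ξ

/-- Law of `Z_n` starting from `Z₀ = z`. -/
noncomputable def lawZ (ξ : (Fin q → ℕ) → Fin p → ℕ) (ν : Fin p → Measure (Fin q → ℕ)) :
    ℕ → (Fin p → ℕ) → Measure (Fin p → ℕ)
  | 0, z => Measure.dirac z
  | (n + 1), z => (lawZ ξ ν n z).bind (stepLaw ξ ν)

/-- `ℙ_z(Z_n ≠ 0)`. -/
noncomputable def surviveP (ξ : (Fin q → ℕ) → Fin p → ℕ) (ν : Fin p → Measure (Fin q → ℕ))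
    (n : ℕ) (z : Fin p → ℕ) : ℝ≥0∞ :=
  lawZ ξ ν n z {x | x ≠ 0}

/-- The exponential convergence parameter `θ₀`. -/
noncomputable def theta0 (ξ : (Fin q → ℕ) → Fin p → ℕ)
    (ν : Fin p → Measure (Fin q → ℕ)) : ℝ :=
  sSup {θ : ℝ | 0 < θ ∧ ∃ z : Fin p → ℕ, z ≠ 0 ∧
    0 < atTop.liminf fun n : ℕ => (surviveP ξ ν n z).toReal / θ ^ n}

/-- `E_z(υ^{-T₀})`, computed through the marginal laws (`0` is absorbing, so
`ℙ_z(T₀ ≤ n) = ℙ_z(Z_n = 0)`), with the convention `υ^{-T₀} = +∞` on `{T₀ = ∞}` when `υ < 1`. -/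
noncomputable def genT0 (ξ : (Fin q → ℕ) → Fin p → ℕ) (ν : Fin p → Measure (Fin q → ℕ))
    (z : Fin p → ℕ) (υ : ℝ) : ℝ≥0∞ :=
  ((if z = 0 then 1 else 0) +
      ∑' n : ℕ, ENNReal.ofReal (υ⁻¹ ^ (n + 1)) *
        (lawZ ξ ν (n + 1) z {x | x = 0} - lawZ ξ ν n z {x | x = 0})) +
    (if υ < 1 then (⊤ : ℝ≥0∞) else if υ = 1 then 1 else 0) * ⨅ n : ℕ, surviveP ξ ν n z

/-- The parameter `υ₀`. -/
noncomputable def upsilon0 (ξ : (Fin q → ℕ) → Fin p → ℕ)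
    (ν : Fin p → Measure (Fin q → ℕ)) : ℝ :=
  sInf {υ : ℝ | 0 < υ ∧ ∀ z : Fin p → ℕ, genT0 ξ ν z υ < ⊤}

/-- Assumption (S): the mating function is super-additive and sub-affine. -/
def AssumpS (ξ : (Fin q → ℕ) → Fin p → ℕ) : Prop :=
  ∃ α β : Fin p → ℝ, (∀ i, 0 ≤ α i) ∧ (∀ i, 0 ≤ β i) ∧
    ∀ x₁ x₂ : Fin q → ℕ, ∀ i : Fin p,
      (ξ (x₁ + x₂) i : ℝ) ≤ α i * (∑ j, ((x₁ j : ℝ) + (x₂ j : ℝ))) + β i ∧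
      ξ x₁ i + ξ x₂ i ≤ ξ (x₁ + x₂) i

/-- ℕ-valued vectors seen as real vectors. -/
def toR (z : Fin p → ℕ) : Fin p → ℝ := fun i => (z i : ℝ)

/-- `M` is the function `𝔐(z) = lim_k ξ(⌊k z𝕍⌋)/k`. -/
def IsLimitM (ξ : (Fin q → ℕ) → Fin p → ℕ) (ν : Fin p → Measure (Fin q → ℕ))
    (M : (Fin p → ℝ) → Fin p → ℝ) : Prop :=
  ∀ z : Fin p → ℝ, (∀ i, 0 ≤ z i) →
    Tendsto (fun k : ℕ => fun i : Fin p =>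
        (ξ (fun j => ⌊(k : ℝ) * ∑ i', z i' * meanV ν i' j⌋₊) i : ℝ) / (k : ℝ))
      atTop (nhds (M z))

/-- The properties of `𝔐` stated in the context: positively homogeneous, nondecreasing,
concave on `ℝ₊^p` and bounded on `𝕊`. -/
def MProps (M : (Fin p → ℝ) → Fin p → ℝ) : Prop :=
  (∀ a : ℝ, 0 < a → ∀ z : Fin p → ℝ, (∀ i, 0 ≤ z i) → M (a • z) = a • M z) ∧
  (∀ z z' : Fin p → ℝ, (∀ i, 0 ≤ z i) → z ≤ z' → M z ≤ M z') ∧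
  ConcaveOn ℝ {z : Fin p → ℝ | ∀ i, 0 ≤ z i} M ∧
  ∃ C : ℝ, ∀ z : Fin p → ℝ, (∀ i, 0 ≤ z i) → (∑ i, z i) = 1 → ∀ i, M z i ≤ C

/-- Assumption (P): primitivity of `𝔐`, with primitivity index `n₀`. -/
def AssumpPrim (M : (Fin p → ℝ) → Fin p → ℝ) (n₀ : ℕ) : Prop :=
  1 ≤ n₀ ∧ ∀ m : ℕ, n₀ ≤ m → ∀ z : Fin p → ℝ, (∀ i, 0 ≤ z i) → z ≠ 0 →
    ∀ i, 0 < (M^[m] z) i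

/-- The Perron-type data `(λ*, z*, 𝒫)` associated with `𝔐`. -/
def IsPerron (M : (Fin p → ℝ) → Fin p → ℝ) (lam : ℝ) (zs : Fin p → ℝ)
    (P : (Fin p → ℝ) → ℝ) : Prop :=
  0 < lam ∧ (∀ i, 0 < zs i) ∧ (∑ i, zs i) = 1 ∧
  (∀ z : Fin p → ℝ, (∀ i, 0 ≤ z i) → z ≠ 0 → 0 < P z) ∧
  (∀ a : ℝ, 0 < a → ∀ z : Fin p → ℝ, (∀ i, 0 ≤ z i) → P (a • z) = a * P z) ∧
  ConcaveOn ℝ {z : Fin p → ℝ | ∀ i, 0 ≤ z i} P ∧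
  ∀ z : Fin p → ℝ, (∀ i, 0 ≤ z i) →
    Tendsto (fun n : ℕ => fun i : Fin p => (M^[n] z) i / lam ^ n) atTop
      (nhds fun i => P z * zs i)

/-- The set `Z_I ⊆ 𝕊`. -/
def ZI (I : Finset (Fin p)) : Set (Fin p → ℝ) :=
  {x | (∑ i, x i) = 1 ∧ ∀ i, (i ∈ I → 0 < x i) ∧ (i ∉ I → x i = 0)}

/-- Assumption (C): uniform continuity of `𝔐` on each `Z_I`. -/
def AssumpC (M : (Fin p → ℝ) → Fin p → ℝ) : Prop :=
  ∀ I : Finset (Fin p), I.Nonempty → UniformContinuousOn M (ZI I)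

/-- The Lyapunov function `Q_a(z) = 𝒫(z)^a`. -/
noncomputable def Qa (P : (Fin p → ℝ) → ℝ) (a : ℝ) (z : Fin p → ℕ) : ℝ :=
  P (toR z) ^ a

/-- `f ∈ L^∞(Q_a)`. -/
def memLinfQa (P : (Fin p → ℝ) → ℝ) (a : ℝ) (f : (Fin p → ℕ) → ℝ) : Prop :=
  ∃ C : ℝ, ∀ z : Fin p → ℕ, z ≠ 0 → |f z| ≤ C * Qa P a z

/-- The norm `‖f‖_{Q_a}`. -/
noncomputable def normQa (P : (Fin p → ℝ) → ℝ) (a : ℝ) (f : (Fin p → ℕ) → ℝ) : ℝ :=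
  sInf {C : ℝ | 0 ≤ C ∧ ∀ z : Fin p → ℕ, z ≠ 0 → |f z| ≤ C * Qa P a z}

/-- `μ ∈ M(Q_a)`: a nonnegative measure on `ℕ^p∖{0}` integrating `Q_a`. -/
def memMQa (P : (Fin p → ℝ) → ℝ) (a : ℝ) (μ : Measure (Fin p → ℕ)) : Prop :=
  μ {x | x = 0} = 0 ∧ (∫⁻ z, ENNReal.ofReal (Qa P a z) ∂μ) < ⊤

/-- Law of `Z_n` when `Z₀ ∼ μ`. -/
noncomputable def lawFrom (ξ : (Fin q → ℕ) → Fin p → ℕ) (ν : Fin p → Measure (Fin q → ℕ))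
    (μ : Measure (Fin p → ℕ)) (n : ℕ) : Measure (Fin p → ℕ) :=
  μ.bind (lawZ ξ ν n)

/-- `μ` is a quasi-stationary distribution for the process. -/
def IsQSD (ξ : (Fin q → ℕ) → Fin p → ℕ) (ν : Fin p → Measure (Fin q → ℕ))
    (μ : Measure (Fin p → ℕ)) : Prop :=
  IsProbabilityMeasure μ ∧ μ {x | x = 0} = 0 ∧
  ∀ n : ℕ, 0 < lawFrom ξ ν μ n {x | x ≠ 0} ∧
    ∀ A : Set (Fin p → ℕ), MeasurableSet A →
      lawFrom ξ ν μ n (A ∩ {x | x ≠ 0}) = lawFrom ξ ν μ n {x | x ≠ 0} * μ A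

/-- `μ` has absorption parameter `θ`. -/
def AbsorbParam (ξ : (Fin q → ℕ) → Fin p → ℕ) (ν : Fin p → Measure (Fin q → ℕ))
    (μ : Measure (Fin p → ℕ)) (θ : ℝ) : Prop :=
  ∀ n : ℕ, lawFrom ξ ν μ n {x | x ≠ 0} = ENNReal.ofReal (θ ^ n)

/-- Aperiodicity of the process. -/
def Aperiodic (ξ : (Fin q → ℕ) → Fin p → ℕ) (ν : Fin p → Measure (Fin q → ℕ)) : Prop :=
  ∀ z : Fin p → ℕ, (∀ n : ℕ, 1 ≤ n → lawZ ξ ν n z {x | x = z} = 0) ∨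
    ∃ n₀ : ℕ, ∀ n : ℕ, n₀ ≤ n → 0 < lawZ ξ ν n z {x | x = z}

/-- Irreducibility of the process on `ℕ^p∖{0}`. -/
def IrreducibleZ (ξ : (Fin q → ℕ) → Fin p → ℕ) (ν : Fin p → Measure (Fin q → ℕ)) : Prop :=
  ∀ x y : Fin p → ℕ, x ≠ 0 → y ≠ 0 → ∃ n : ℕ, 0 < lawZ ξ ν n x {w | w = y}


section MyAux

variable (ξ : (Fin q → ℕ) → Fin p → ℕ) (ν : Fin p → Measure (Fin q → ℕ))

lemma prob_offspring (hν : ∀ i, IsProbabilityMeasure (ν i)) (z : Fin p → ℕ) :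
    IsProbabilityMeasure (offspringLaw ν z) := by
  haveI : ∀ ik : Σ i : Fin p, Fin (z i), IsProbabilityMeasure ((fun ik : Σ i : Fin p, Fin (z i) => ν ik.1) ik) :=
    fun ik => hν ik.1
  exact Measure.isProbabilityMeasure_map (measurable_of_countable _).aemeasurable

lemma prob_step (hν : ∀ i, IsProbabilityMeasure (ν i)) (z : Fin p → ℕ) :
    IsProbabilityMeasure (stepLaw ξ ν z) := by
  haveI := prob_offspring ν hν z
  exact Measure.isProbabilityMeasure_map (measurable_of_countable _).aemeasurable

lemma prob_lawZ (hν : ∀ i, IsProbabilityMeasure (ν i)) (n : ℕ) (z : Fin p → ℕ) :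
    IsProbabilityMeasure (lawZ ξ ν n z) := by
  induction n generalizing z with
  | zero => exact Measure.dirac.isProbabilityMeasure
  | succ n ih =>
    constructor
    rw [lawZ, Measure.bind_apply MeasurableSet.univ (measurable_of_countable _).aemeasurable]
    have : ∀ y : Fin p → ℕ, stepLaw ξ ν y Set.univ = 1 := fun y => (prob_step ξ ν hν y).measure_univ
    simp only [this]
    simpa using (ih z).measure_univ

lemma lawZ_succ' (n : ℕ) (z : Fin p → ℕ) :
    lawZ ξ ν (n + 1) z = (stepLaw ξ ν z).bind (lawZ ξ ν n) := by
  induction n generalizing z with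
  | zero =>
    show (Measure.dirac z).bind (stepLaw ξ ν) = (stepLaw ξ ν z).bind Measure.dirac
    rw [Measure.dirac_bind (measurable_of_countable _), Measure.bind_dirac]
  | succ n ih =>
    show (lawZ ξ ν (n+1) z).bind (stepLaw ξ ν) = _
    rw [ih, Measure.bind_bind (measurable_of_countable _).aemeasurable (measurable_of_countable _).aemeasurable]
    rfl

lemma ext_rec (n : ℕ) (z : Fin p → ℕ) :
    lawZ ξ ν (n + 1) z {x | x = 0} =
      ∫⁻ w, lawZ ξ ν n (ξ w) {x | x = 0} ∂(offspringLaw ν z) := by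
  rw [lawZ_succ', Measure.bind_apply ((Set.to_countable _).measurableSet)
    (measurable_of_countable _).aemeasurable, stepLaw,
    lintegral_map (measurable_of_countable _) (measurable_of_countable _)]

lemma offspring_split (hν : ∀ i, IsProbabilityMeasure (ν i)) (z₁ z₂ : Fin p → ℕ)
    (f : (Fin q → ℕ) → ℝ≥0∞) :
    ∫⁻ w, f w ∂(offspringLaw ν (z₁ + z₂))
      = ∫⁻ w₁, ∫⁻ w₂, f (w₁ + w₂) ∂(offspringLaw ν z₂) ∂(offspringLaw ν z₁) := by
  classical
  let A := (Σ i : Fin p, Fin (z₁ i))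
  let B := (Σ i : Fin p, Fin (z₂ i))
  let C := (Σ i : Fin p, Fin ((z₁ + z₂) i))
  let e : A ⊕ B ≃ C :=
    ((Equiv.sigmaSumDistrib (fun i => Fin (z₁ i)) (fun i => Fin (z₂ i))).symm).trans
      (Equiv.sigmaCongrRight (fun i => finSumFinEquiv))
  let μC : ∀ _ : C, Measure (Fin q → ℕ) := fun c => ν c.1
  haveI : ∀ c : C, IsProbabilityMeasure (μC c) := fun c => hν c.1
  haveI : ∀ a : A, IsProbabilityMeasure ((fun a : A => μC (e (Sum.inl a))) a) :=
    fun a => hν _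
  haveI : ∀ b : B, IsProbabilityMeasure ((fun b : B => μC (e (Sum.inr b))) b) :=
    fun b => hν _
  have h2 := measurePreserving_piCongrLeft (μ := μC) e
  have h1 := measurePreserving_sumPiEquivProdPi_symm
    (X := fun _ : A ⊕ B => (Fin q → ℕ)) (μ := fun s => μC (e s))
  have h := h2.comp h1
  have hL : (fun a : A => μC (e (Sum.inl a))) = fun a : A => ν a.1 := rfl
  have hR : (fun b : B => μC (e (Sum.inr b))) = fun b : B => ν b.1 := rfl
  rw [offspringLaw, offspringLaw, offspringLaw,
    lintegral_map (measurable_of_countable _) (measurable_of_countable _),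
    lintegral_map (measurable_of_countable _) (measurable_of_countable _),
    ← h.lintegral_comp (measurable_of_countable _)]
  rw [hL] at h1 h
  rw [lintegral_prod _ (measurable_of_countable _).aemeasurable]
  refine lintegral_congr fun ω₁ => ?_
  rw [lintegral_map (measurable_of_countable _) (measurable_of_countable _)]
  refine lintegral_congr fun ω₂ => ?_
  congr 1
  funext j
  show ∑ ik : C, ((MeasurableEquiv.piCongrLeft (fun _ : C => Fin q → ℕ) e)
      ((MeasurableEquiv.sumPiEquivProdPi (fun _ : A ⊕ B => Fin q → ℕ)).symm (ω₁, ω₂)) ik j)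
    = (∑ a : A, ω₁ a j) + (∑ b : B, ω₂ b j)
  rw [← Equiv.sum_comp e
    (fun ik : C => (MeasurableEquiv.piCongrLeft (fun _ : C => Fin q → ℕ) e)
      ((MeasurableEquiv.sumPiEquivProdPi (fun _ : A ⊕ B => Fin q → ℕ)).symm (ω₁, ω₂)) ik j)]
  simp only [MeasurableEquiv.piCongrLeft_apply_apply]
  rw [Fintype.sum_sum_type]
  rfl

lemma submult (hν : ∀ i, IsProbabilityMeasure (ν i))
    (hsuper : ∀ x₁ x₂ : Fin q → ℕ, ∀ i : Fin p, ξ x₁ i + ξ x₂ i ≤ ξ (x₁ + x₂) i) (n : ℕ) :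
    ∀ z₁ z₂ : Fin p → ℕ, lawZ ξ ν n (z₁ + z₂) {x | x = 0}
      ≤ lawZ ξ ν n z₁ {x | x = 0} * lawZ ξ ν n z₂ {x | x = 0} := by
  induction n with
  | zero =>
    intro z₁ z₂
    show Measure.dirac (z₁ + z₂) {x | x = 0}
      ≤ Measure.dirac z₁ {x | x = 0} * Measure.dirac z₂ {x | x = 0}
    simp only [Set.setOf_eq_eq_singleton, Measure.dirac_apply' _ (measurableSet_singleton _)]
    by_cases h1 : z₁ = 0 <;> by_cases h2 : z₂ = 0 <;>
      simp [Set.indicator, h1, h2, add_eq_zero]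
  | succ n ih =>
    have hle1 : ∀ z, lawZ ξ ν n z {x | x = 0} ≤ 1 := fun z =>
      ((prob_lawZ ξ ν hν n z).measure_univ) ▸ measure_mono (Set.subset_univ _)
    have anti : ∀ y y' : Fin p → ℕ, y ≤ y' →
        lawZ ξ ν n y' {x | x = 0} ≤ lawZ ξ ν n y {x | x = 0} := by
      intro y y' hy
      have hyy : y' = y + (y' - y) := funext fun i => (Nat.add_sub_cancel' (hy i)).symm
      rw [hyy]
      exact (ih y (y' - y)).trans (mul_le_of_le_one_right zero_le (hle1 _))
    intro z₁ z₂
    rw [ext_rec, ext_rec, ext_rec, offspring_split ν hν]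
    calc ∫⁻ w₁, ∫⁻ w₂, lawZ ξ ν n (ξ (w₁ + w₂)) {x | x = 0}
            ∂(offspringLaw ν z₂) ∂(offspringLaw ν z₁)
        ≤ ∫⁻ w₁, ∫⁻ w₂, lawZ ξ ν n (ξ w₁) {x | x = 0} * lawZ ξ ν n (ξ w₂) {x | x = 0}
            ∂(offspringLaw ν z₂) ∂(offspringLaw ν z₁) := by
          refine lintegral_mono fun w₁ => lintegral_mono fun w₂ => ?_
          exact (anti _ _ (fun i => hsuper w₁ w₂ i)).trans (ih (ξ w₁) (ξ w₂))
      _ = ∫⁻ w₁, lawZ ξ ν n (ξ w₁) {x | x = 0}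
            * ∫⁻ w₂, lawZ ξ ν n (ξ w₂) {x | x = 0} ∂(offspringLaw ν z₂)
            ∂(offspringLaw ν z₁) := by
          refine lintegral_congr fun w₁ => ?_
          rw [lintegral_const_mul _ (measurable_of_countable _)]
      _ = (∫⁻ w₁, lawZ ξ ν n (ξ w₁) {x | x = 0} ∂(offspringLaw ν z₁))
            * ∫⁻ w₂, lawZ ξ ν n (ξ w₂) {x | x = 0} ∂(offspringLaw ν z₂) :=
          lintegral_mul_const _ (measurable_of_countable _)

lemma prod_bound (hν : ∀ i, IsProbabilityMeasure (ν i))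
    (hsuper : ∀ x₁ x₂ : Fin q → ℕ, ∀ i : Fin p, ξ x₁ i + ξ x₂ i ≤ ξ (x₁ + x₂) i) (n : ℕ) :
    ∀ m : ℕ, ∀ z : Fin (m + 1) → (Fin p → ℕ),
      lawZ ξ ν n (∑ i, z i) {x | x = 0} ≤ ∏ i, lawZ ξ ν n (z i) {x | x = 0} := by
  intro m
  induction m with
  | zero => intro z; simp
  | succ m ih =>
    intro z
    rw [Fin.sum_univ_castSucc, Fin.prod_univ_castSucc]
    exact (submult ξ ν hν hsuper n _ _).trans (mul_le_mul_left (ih _) _)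

end MyAux

/-- If `ξ` is super-additive then
`ℙ_{z₁+⋯+z_ℓ}(Z_n = 0) ≤ ∏ᵢ ℙ_{zᵢ}(Z_n = 0)`. -/
theorem extinction_prob_superadditive
    {p q : ℕ} (hp : 1 ≤ p) (hq : 1 ≤ q)
    (ξ : (Fin q → ℕ) → Fin p → ℕ) (hξ0 : ξ 0 = 0)
    (ν : Fin p → Measure (Fin q → ℕ)) (hν : ∀ i, IsProbabilityMeasure (ν i))
    (hint : ∀ i j, (∫⁻ w, (w j : ℝ≥0∞) ∂(ν i)) < ⊤)
    (hmean : ∀ j, 0 < ∑ i, meanV ν i j)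
    (hsuper : ∀ x₁ x₂ : Fin q → ℕ, ∀ i : Fin p, ξ x₁ i + ξ x₂ i ≤ ξ (x₁ + x₂) i) :
    ∀ ℓ : ℕ, 1 ≤ ℓ → ∀ z : Fin ℓ → (Fin p → ℕ), ∀ n : ℕ,
      lawZ ξ ν n (∑ i, z i) {x | x = 0} ≤ ∏ i, lawZ ξ ν n (z i) {x | x = 0} := by
  intro ℓ hℓ z n
  obtain ⟨m, rfl⟩ : ∃ m, ℓ = m + 1 := ⟨ℓ - 1, (Nat.succ_pred_eq_of_pos hℓ).symm⟩
  exact prod_bound ξ ν hν hsuper n m z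

end BGW
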